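/- Let ν ∈ (0,1), let ι be a finite index set with |ι| ≥ 2, and let m : ι → ℝ. Let x₁ be an index maximizing m over ι and x₂ an index maximizing m over ι \ {x₁}. Define, for a ∈ ι and 0 ≤ k ≤ L−1 (with L ≥ 1), q_k^{LB}(m,a) = ( ξ(a;m) + exp( ( min over ordered pairs of distinct indices (x_i,x_j) of ( m[x_i] − ν·m[x_j] ) ) / (1−ν) ) · h(ν) · Σ_{n=1}^{L−k−1} g(ν)^n ) / Σ_{l∈ι} exp(m[l]) and q_k^{UB}(m,a) = (1 + h(ν))^{L−k−1} · ξ(a;m) / Σ_{l∈ι} exp(m[l]). Then for every a ∈ ι, q_k^{LB}(m,a) ≤ q_k^{LB}(m,x₂) and q_k^{UB}(m,a) ≤ q_k^{UB}(m,x₂); that is, the second-best index x₂ maximizes both bounds over a. -/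

import Mathlib

open Real MeasureTheory Finset

set_option linter.unusedSectionVars false

noncomputable section

variable {ι : Type*} [Fintype ι] [DecidableEq ι]

/-- The log-likelihood update function `J(y) = (1-ν)y + ln ν`. -/
def Jfun (ν y : ℝ) : ℝ := (1 - ν) * y + Real.log ν

/-- `h(ν) = exp(ν ln ν/(1-ν)) - exp(ln ν/(1-ν))`. -/
def hfun (ν : ℝ) : ℝ :=
  Real.exp (ν * Real.log ν / (1 - ν)) - Real.exp (Real.log ν / (1 - ν))

/-- `g(ν) = exp(ln ν/(1-ν)) (1/(ν+1) - ln ν/(1-ν))`. -/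
def gfun (ν : ℝ) : ℝ :=
  Real.exp (Real.log ν / (1 - ν)) * (1 / (ν + 1) - Real.log ν / (1 - ν))

/-- Kronecker delta `δ[a,x]` as a real number. -/
def kdelta (a x : ι) : ℝ := if x = a then 1 else 0

theorem univ_nonempty_of_card (hcard : 2 ≤ Fintype.card ι) :
    (Finset.univ : Finset ι).Nonempty := by
  rw [← Finset.card_pos]
  have : (Finset.univ : Finset ι).card = Fintype.card ι := rfl
  omega

theorem erase_nonempty_of_card (hcard : 2 ≤ Fintype.card ι) (a : ι) :
    ((Finset.univ : Finset ι).erase a).Nonempty := by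
  rw [← Finset.card_pos, Finset.card_erase_of_mem (Finset.mem_univ a)]
  have : (Finset.univ : Finset ι).card = Fintype.card ι := rfl
  omega

theorem pairs_nonempty_of_card (hcard : 2 ≤ Fintype.card ι) :
    ((Finset.univ : Finset (ι × ι)).filter fun p => p.1 ≠ p.2).Nonempty := by
  obtain ⟨a, b, hab⟩ := Fintype.exists_pair_of_one_lt_card (α := ι) (by omega)
  exact ⟨(a, b), by simp [hab]⟩

/-- `max_{â ≠ a} m[â]`. -/
def maxOther (hcard : 2 ≤ Fintype.card ι) (m : ι → ℝ) (a : ι) : ℝ :=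
  ((Finset.univ : Finset ι).erase a).sup' (erase_nonempty_of_card hcard a) m

/-- `ξ(a; m)`. -/
def xi (ν : ℝ) (hcard : 2 ≤ Fintype.card ι) (m : ι → ℝ) (a : ι) : ℝ :=
  if maxOther hcard m a - m a < Real.log ν then Real.exp (m a)
  else Real.exp (maxOther hcard m a)
    + hfun ν * Real.exp ((m a - ν * maxOther hcard m a) / (1 - ν))

/-- `min_{x_i ≠ x_j} (m[x_i] - ν m[x_j])`, over ordered pairs of distinct indices. -/
def minPair (ν : ℝ) (hcard : 2 ≤ Fintype.card ι) (m : ι → ℝ) : ℝ :=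
  (((Finset.univ : Finset (ι × ι)).filter fun p => p.1 ≠ p.2).inf'
    (pairs_nonempty_of_card hcard)) (fun p => m p.1 - ν * m p.2)

/-- The feedback density `f(y | m, a) = b[a] ν e^{-νy} + (1-b[a]) e^{-y}`. -/
def fdens (ν : ℝ) (m : ι → ℝ) (a : ι) (y : ℝ) : ℝ :=
  (Real.exp (m a) / ∑ l, Real.exp (m l)) * (ν * Real.exp (-ν * y))
    + (1 - Real.exp (m a) / ∑ l, Real.exp (m l)) * Real.exp (-y)

/-- Terminal value `V_L(m) = max_x exp(m[x]) / ∑_l exp(m[l])`. -/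
def Vterm (hcard : 2 ≤ Fintype.card ι) (m : ι → ℝ) : ℝ :=
  ((Finset.univ : Finset ι).sup' (univ_nonempty_of_card hcard) fun x => Real.exp (m x))
    / ∑ l, Real.exp (m l)




lemma my_convexOn_sinh : ConvexOn ℝ (Set.Ici 0) Real.sinh := by
  refine convexOn_of_hasDerivWithinAt2_nonneg (convex_Ici 0)
    Real.continuous_sinh.continuousOn
    (fun x _ => (Real.hasDerivAt_sinh x).hasDerivWithinAt)
    (fun x _ => (Real.hasDerivAt_cosh x).hasDerivWithinAt)
    (fun x hx => ?_)
  rw [interior_Ici, Set.mem_Ioi] at hx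
  exact (Real.sinh_pos_iff.2 hx).le

lemma my_sinh_ratio {a b : ℝ} (hb : 0 ≤ b) (hba : b ≤ a) :
    a * Real.sinh b ≤ b * Real.sinh a := by
  rcases eq_or_lt_of_le (hb.trans hba) with h0 | h0
  · have ha0 : a = 0 := h0.symm
    have hb0 : b = 0 := le_antisymm (hba.trans_eq ha0) hb
    simp [ha0, hb0]
  · have ht0 : (0:ℝ) ≤ b / a := div_nonneg hb h0.le
    have ht1 : b / a ≤ 1 := div_le_one_of_le₀ hba h0.le
    have hcv := my_convexOn_sinh.2 (Set.self_mem_Ici (a := (0:ℝ)))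
      (Set.mem_Ici.2 (hb.trans hba)) (by linarith : (0:ℝ) ≤ 1 - b/a) ht0 (by ring)
    simp only [smul_eq_mul, Real.sinh_zero, mul_zero, zero_add] at hcv
    have hbb : b / a * a = b := by field_simp
    rw [hbb] at hcv
    calc a * Real.sinh b ≤ a * (b/a * Real.sinh a) :=
          mul_le_mul_of_nonneg_left hcv h0.le
      _ = b * Real.sinh a := by field_simp

lemma my_sinh_mul_ge {c x : ℝ} (hc : 1 ≤ c) (hx : 0 ≤ x) :
    c * Real.sinh x ≤ Real.sinh (c * x) := by
  rcases eq_or_lt_of_le hx with h0 | h0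
  · simp [← h0]
  · have := my_sinh_ratio (a := c * x) (b := x) hx (by nlinarith)
    calc c * Real.sinh x = (c * x) * Real.sinh x / x := by field_simp
      _ ≤ x * Real.sinh (c*x) / x := by gcongr
      _ = Real.sinh (c*x) := by field_simp


-- 2 sinh A cosh B = sinh(A+B) + sinh(A-B)
lemma my_prod_sum (A B : ℝ) :
    2 * Real.sinh A * Real.cosh B = Real.sinh (A+B) + Real.sinh (A-B) := by
  rw [Real.sinh_add, Real.sinh_sub]; ring

lemma my_tanh_ineq {c x : ℝ} (hc : 1 ≤ c) (hx : 0 ≤ x) :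
    Real.cosh x * Real.sinh (c*x) ≤ c * Real.sinh x * Real.cosh (c*x) := by
  have h1 : 2 * Real.sinh (c*x) * Real.cosh x
      = Real.sinh ((c+1)*x) + Real.sinh ((c-1)*x) := by
    rw [my_prod_sum]; ring_nf
  have h2 : 2 * Real.sinh x * Real.cosh (c*x)
      = Real.sinh ((c+1)*x) - Real.sinh ((c-1)*x) := by
    have := my_prod_sum x (c*x)
    rw [this]; congr 1 <;> [skip; rw [← Real.sinh_neg]] <;> congr 1 <;> ring
  have key : ((c+1)*x) * Real.sinh ((c-1)*x) ≤ ((c-1)*x) * Real.sinh ((c+1)*x) :=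
    my_sinh_ratio (mul_nonneg (by linarith) hx) (by nlinarith)
  rcases eq_or_lt_of_le hx with h0 | h0
  · simp [← h0]
  · -- from key: (c+1) sinh((c-1)x) ≤ (c-1) sinh((c+1)x)
    have key2 : (c+1) * Real.sinh ((c-1)*x) ≤ (c-1) * Real.sinh ((c+1)*x) := by
      have hx' : 0 < x := h0
      nlinarith [key]
    nlinarith [h1, h2]

lemma my_core {c δ τ : ℝ} (hc : 1 ≤ c) (hδ : 0 ≤ δ) (hδτ : δ ≤ τ) :
    Real.sinh τ * Real.sinh (c*δ) ≤ Real.sinh δ * Real.sinh (c*τ) := by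
  set w := τ - δ with hw
  have hw0 : 0 ≤ w := by simp [hw]; linarith
  have hτ : τ = δ + w := by ring
  have e1 : Real.sinh (c*τ) = Real.sinh (c*δ) * Real.cosh (c*w)
      + Real.cosh (c*δ) * Real.sinh (c*w) := by
    rw [hτ, mul_add, Real.sinh_add]
  have e2 : Real.sinh τ = Real.sinh δ * Real.cosh w + Real.cosh δ * Real.sinh w := by
    rw [hτ, Real.sinh_add]
  have f1 : Real.cosh w ≤ Real.cosh (c*w) := by
    rw [Real.cosh_le_cosh, abs_of_nonneg hw0, abs_of_nonneg (by nlinarith : (0:ℝ) ≤ c*w)]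
    nlinarith
  have f2 : c * Real.sinh w ≤ Real.sinh (c*w) := my_sinh_mul_ge hc hw0
  have f3 : Real.cosh δ * Real.sinh (c*δ) ≤ c * Real.sinh δ * Real.cosh (c*δ) :=
    my_tanh_ineq hc hδ
  have sδ : 0 ≤ Real.sinh δ := Real.sinh_nonneg_iff.2 hδ
  have scδ : 0 ≤ Real.sinh (c*δ) := Real.sinh_nonneg_iff.2 (by nlinarith)
  have sw : 0 ≤ Real.sinh w := Real.sinh_nonneg_iff.2 hw0
  have cδ : 0 < Real.cosh δ := Real.cosh_pos _
  have ccδ : 0 < Real.cosh (c*δ) := Real.cosh_pos _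
  rw [e1, e2]
  nlinarith [mul_le_mul_of_nonneg_left f1 (mul_nonneg sδ scδ),
    mul_le_mul_of_nonneg_left f2 (mul_nonneg sδ ccδ.le),
    mul_le_mul_of_nonneg_right f3 sw]


lemma my_key {ν d : ℝ} (hν0 : 0 < ν) (hν1 : ν < 1) (hd0 : 0 ≤ d) (hdt : d ≤ -Real.log ν) :
    1 + hfun ν * Real.exp (d/(1-ν)) ≤ Real.exp d + hfun ν * Real.exp (-(ν*d)/(1-ν)) := by
  have h1ν : (0:ℝ) < 1 - ν := by linarith
  set τ : ℝ := -Real.log ν / 2 with hτdef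
  set δ : ℝ := d / 2 with hδdef
  set c : ℝ := (1+ν)/(1-ν) with hcdef
  have hc1 : 1 ≤ c := by rw [hcdef, le_div_iff₀ h1ν]; linarith
  have hτ0 : 0 ≤ τ := by
    have := Real.log_neg hν0 hν1; rw [hτdef]; linarith
  have hδ0 : 0 ≤ δ := by rw [hδdef]; linarith
  have hδτ : δ ≤ τ := by rw [hδdef, hτdef]; linarith
  -- hfun ν = 2 * exp (-(c*τ)) * sinh τ
  have hH : hfun ν = 2 * Real.exp (-(c*τ)) * Real.sinh τ := by
    rw [hfun, Real.sinh_eq]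
    have e1 : ν * Real.log ν / (1-ν) = -(c*τ) + τ := by
      rw [hcdef, hτdef]; field_simp; ring
    have e2 : Real.log ν / (1-ν) = -(c*τ) + -τ := by
      rw [hcdef, hτdef]; field_simp; ring
    rw [e1, e2, Real.exp_add, Real.exp_add]; ring
  -- crux : 2 exp(-(cτ)) sinh τ sinh (cδ) ≤ sinh δ
  have core := my_core hc1 hδ0 hδτ
  have hfact : 2 * Real.exp (-(c*τ)) * Real.sinh (c*τ) = 1 - Real.exp (-(2*(c*τ))) := by
    rw [Real.sinh_eq]
    have j1 : Real.exp (-(c*τ)) * Real.exp (c*τ) = 1 := by rw [← Real.exp_add]; simp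
    have j2 : Real.exp (-(2*(c*τ))) = Real.exp (-(c*τ)) * Real.exp (-(c*τ)) := by
      rw [← Real.exp_add]; ring_nf
    rw [j2]; linear_combination j1
  have sδ : 0 ≤ Real.sinh δ := Real.sinh_nonneg_iff.2 hδ0
  have crux : 2 * Real.exp (-(c*τ)) * Real.sinh τ * Real.sinh (c*δ) ≤ Real.sinh δ := by
    have h2 : 2 * Real.exp (-(c*τ)) * Real.sinh τ * Real.sinh (c*δ)
        ≤ 2 * Real.exp (-(c*τ)) * (Real.sinh δ * Real.sinh (c*τ)) := by
      have := Real.exp_pos (-(c*τ))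
      nlinarith [core]
    have h3 : 2 * Real.exp (-(c*τ)) * (Real.sinh δ * Real.sinh (c*τ))
        = Real.sinh δ * (1 - Real.exp (-(2*(c*τ)))) := by
      rw [← hfact]; ring
    have h4 : Real.sinh δ * (1 - Real.exp (-(2*(c*τ)))) ≤ Real.sinh δ := by
      nlinarith [Real.exp_pos (-(2*(c*τ)))]
    linarith [h2, h3.le, h3.ge, h4]
  -- translate to exps
  have ed : d = δ + δ := by rw [hδdef]; ring
  have ea : d/(1-ν) = δ + c*δ := by rw [hδdef, hcdef]; field_simp; ring
  have eb : -(ν*d)/(1-ν) = δ - c*δ := by rw [hδdef, hcdef]; field_simp; ring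
  have eb' : δ - c*δ = δ + -(c*δ) := by ring
  rw [hH, ea, eb, eb', ed, Real.exp_add, Real.exp_add, Real.exp_add]
  have hsd : Real.sinh δ = (Real.exp δ - Real.exp (-δ)) / 2 := Real.sinh_eq δ
  have hsc : Real.sinh (c*δ) = (Real.exp (c*δ) - Real.exp (-(c*δ))) / 2 := Real.sinh_eq _
  have i1 : Real.exp δ * Real.exp (-δ) = 1 := by rw [← Real.exp_add]; simp
  have i2 : Real.exp (c*δ) * Real.exp (-(c*δ)) = 1 := by rw [← Real.exp_add]; simp
  have hp1 := Real.exp_pos δ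
  have hp2 := Real.exp_pos (c*δ)
  have hp3 := Real.exp_pos (-(c*τ))
  rw [hsd, hsc] at crux
  have hEδ := mul_le_mul_of_nonneg_left crux hp1.le
  nlinarith [hEδ, i1, i2]

lemma my_hfun_pos {ν : ℝ} (hν0 : 0 < ν) (hν1 : ν < 1) : 0 < hfun ν := by
  have hl : Real.log ν < 0 := Real.log_neg hν0 hν1
  have h1ν : (0:ℝ) < 1 - ν := by linarith
  rw [hfun, sub_pos]
  apply Real.exp_lt_exp.2
  apply div_lt_div_of_pos_right ?_ h1ν
  nlinarith


/-- the second-best index `x₂` maximizes both the lower bound `q_k^{LB}` and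
the upper bound `q_k^{UB}` of the Q-function (second-best maximizer claim of Theorem 1). -/
theorem bounds_maximized_at_secondBest
    (ν : ℝ) (hν : ν ∈ Set.Ioo (0:ℝ) 1)
    (hcard : 2 ≤ Fintype.card ι) (m : ι → ℝ)
    (x₁ x₂ : ι) (hx₁ : ∀ x, m x ≤ m x₁) (hne : x₂ ≠ x₁)
    (hx₂ : ∀ x, x ≠ x₁ → m x ≤ m x₂)
    (L k : ℕ) (hL : 1 ≤ L) (hk : k ≤ L - 1)
    (qLB qUB : ι → ℝ)
    (hqLB : ∀ a, qLB a =
      (xi ν hcard m a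
        + Real.exp (minPair ν hcard m / (1 - ν)) * hfun ν
          * ∑ n ∈ Finset.Icc 1 (L - k - 1), gfun ν ^ n)
        / ∑ l, Real.exp (m l))
    (hqUB : ∀ a, qUB a =
      (1 + hfun ν) ^ (L - k - 1) * xi ν hcard m a / ∑ l, Real.exp (m l)) :
    ∀ a, qLB a ≤ qLB x₂ ∧ qUB a ≤ qUB x₂ := by
  obtain ⟨hν0, hν1⟩ := hν
  have hl : Real.log ν < 0 := Real.log_neg hν0 hν1
  have h1ν : (0:ℝ) < 1 - ν := by linarith
  have hh : 0 < hfun ν := my_hfun_pos hν0 hν1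
  have hS : 0 < ∑ l, Real.exp (m l) :=
    Finset.sum_pos (fun i _ => Real.exp_pos _) (univ_nonempty_of_card hcard)
  -- maxOther values
  have hmax1 : ∀ a, a ≠ x₁ → maxOther hcard m a = m x₁ := by
    intro a ha
    refine le_antisymm (Finset.sup'_le _ _ fun x _ => hx₁ x) ?_
    exact Finset.le_sup' m (Finset.mem_erase.2 ⟨Ne.symm ha, Finset.mem_univ _⟩)
  have hmax2 : maxOther hcard m x₁ = m x₂ := by
    refine le_antisymm (Finset.sup'_le _ _ fun x hx => hx₂ x (Finset.mem_erase.1 hx).1) ?_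
    exact Finset.le_sup' m (Finset.mem_erase.2 ⟨hne, Finset.mem_univ _⟩)
  have h21 : m x₂ ≤ m x₁ := hx₁ x₂
  -- value of xi at x₂
  have hxi2 : xi ν hcard m x₂
      = Real.exp (m x₁) + hfun ν * Real.exp ((m x₂ - ν * m x₁)/(1-ν)) := by
    rw [xi, hmax1 x₂ hne, if_neg (by linarith)]
  -- xi is maximized at x₂
  have hximax : ∀ a, xi ν hcard m a ≤ xi ν hcard m x₂ := by
    intro a
    rcases eq_or_ne a x₁ with ha | ha
    · rw [ha, xi, hmax2]
      split_ifs with hcond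
      · rw [hxi2]
        nlinarith [Real.exp_pos ((m x₂ - ν * m x₁)/(1-ν))]
      · push_neg at hcond
        set d : ℝ := m x₁ - m x₂ with hd
        have hd0 : 0 ≤ d := by rw [hd]; linarith
        have hdt : d ≤ -Real.log ν := by rw [hd]; linarith
        have key := my_key hν0 hν1 hd0 hdt
        have hmul := mul_le_mul_of_nonneg_left key (Real.exp_pos (m x₂)).le
        have E1 : Real.exp (m x₂) * Real.exp (d/(1-ν))
            = Real.exp ((m x₁ - ν * m x₂)/(1-ν)) := by
          rw [← Real.exp_add]; congr 1; rw [hd]; field_simp; ring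
        have E2 : Real.exp (m x₂) * Real.exp d = Real.exp (m x₁) := by
          rw [← Real.exp_add]; congr 1; rw [hd]; ring
        have E3 : Real.exp (m x₂) * Real.exp (-(ν*d)/(1-ν))
            = Real.exp ((m x₂ - ν * m x₁)/(1-ν)) := by
          rw [← Real.exp_add]; congr 1; rw [hd]; field_simp; ring
        rw [hxi2]
        nlinarith [hmul, E1, E2, E3]
    · rw [xi, hmax1 a ha, if_neg (by linarith [hx₁ a]), hxi2]
      have hexp : (m a - ν * m x₁)/(1-ν) ≤ (m x₂ - ν * m x₁)/(1-ν) :=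
        div_le_div_of_nonneg_right (by linarith [hx₂ a ha]) h1ν.le
      have := Real.exp_le_exp.2 hexp
      nlinarith
  have hpow : (0:ℝ) ≤ (1 + hfun ν)^(L-k-1) := pow_nonneg (by linarith) _
  intro a
  constructor
  · rw [hqLB a, hqLB x₂]
    gcongr
    exact hximax a
  · rw [hqUB a, hqUB x₂]
    exact div_le_div_of_nonneg_right (mul_le_mul_of_nonneg_left (hximax a) hpow) hS.le


end
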